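/- The sums S(q) = Σ_{n=1}^{q−1} 1/(2q sin(nπ/q)) satisfy S(q) = (1/π) log q + O(1) as q → ∞; that is, there exists a constant C such that |S(q) − (1/π) log q| ≤ C for all integers q ≥ 2. -/

import Mathlib

open Real Finset

set_option linter.unreachableTactic false
set_option linter.unusedTactic false


/-- On (0, π/2], `1/x ≤ 1/sin x ≤ 1/x + x`. -/
lemma inv_sin_est {x : ℝ} (hx : 0 < x) (hx2 : x ≤ π / 2) :
    1 / x ≤ 1 / Real.sin x ∧ 1 / Real.sin x ≤ 1 / x + x := by
  have hπ : (3:ℝ) < π := Real.pi_gt_three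
  have hπ' : π < 3.15 := Real.pi_lt_d2
  have hs : 0 < Real.sin x := Real.sin_pos_of_pos_of_lt_pi hx (by linarith)
  have hsle : Real.sin x ≤ x := (Real.sin_lt hx).le
  have hJ : 2 * x ≤ π * Real.sin x := by
    have := Real.mul_le_sin hx.le hx2
    rw [div_mul_eq_mul_div, div_le_iff₀ Real.pi_pos] at this
    linarith
  refine ⟨by gcongr, ?_⟩
  have hcube : x - Real.sin x ≤ 2 / 5 * x ^ 3 := by
    rcases le_or_gt x 1 with h1 | h1
    · nlinarith [Real.sin_gt_sub_cube hx]
    · have hx3 : x ≤ x ^ 3 := by nlinarith [mul_pos (mul_pos hx (sub_pos.2 h1)) (show (0:ℝ) < x + 1 by linarith)]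
      nlinarith [pow_pos hx 3]
  have key : x ≤ (1 + x ^ 2) * Real.sin x := by
    have h2 : x ^ 2 * (2 * x) ≤ x ^ 2 * (π * Real.sin x) :=
      mul_le_mul_of_nonneg_left hJ (sq_nonneg x)
    nlinarith [mul_nonneg (sq_nonneg x) hs.le]
  have : 1 / Real.sin x ≤ (1 + x ^ 2) / x := by
    rw [div_le_div_iff₀ hs hx]; linarith
  calc 1 / Real.sin x ≤ (1 + x ^ 2) / x := this
    _ = 1 / x + x := by field_simp


lemma term_est {q n : ℕ} (hq : 2 ≤ q) (hn1 : 1 ≤ n) (hnq : n < q) :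
    |1 / (2 * (q:ℝ) * Real.sin (n * π / q)) - 1 / (2 * π * (min n (q - n) : ℕ))| ≤ π / (4 * q) := by
  have hπ := Real.pi_pos
  have hq0 : (0:ℝ) < q := by positivity
  set m : ℕ := min n (q - n) with hm
  have hm1 : 1 ≤ m := le_min hn1 (by omega)
  have hm2 : 2 * m ≤ q := by omega
  have hm0 : (0:ℝ) < m := by exact_mod_cast hm1
  have hm2' : 2 * (m:ℝ) ≤ q := by exact_mod_cast hm2
  set x : ℝ := m * π / q with hxdef
  have hx : 0 < x := by positivity
  have hx2 : x ≤ π / 2 := by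
    rw [hxdef, div_le_div_iff₀ hq0 two_pos]
    nlinarith
  -- sin equality
  have hsin : Real.sin (n * π / q) = Real.sin x := by
    rcases le_or_gt n (q - n) with h | h
    · have : m = n := min_eq_left h
      rw [hxdef, this]
    · have hmn : m = q - n := min_eq_right h.le
      have hcast : ((q - n : ℕ) : ℝ) = (q : ℝ) - n := by
        rw [Nat.cast_sub hnq.le]
      have : x = π - n * π / q := by
        rw [hxdef, hmn, hcast]; field_simp
      rw [this, Real.sin_pi_sub]
  obtain ⟨hlow, hup⟩ := inv_sin_est hx hx2
  have hs : 0 < Real.sin x := Real.sin_pos_of_pos_of_lt_pi hx (by linarith)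
  have e1 : 1 / (2 * (q:ℝ) * Real.sin (n * π / q)) = 1 / (2 * q) * (1 / Real.sin x) := by
    rw [hsin]; ring
  have e2 : 1 / (2 * π * (m:ℝ)) = 1 / (2 * (q:ℝ)) * (1 / x) := by
    rw [hxdef]; field_simp
  rw [e1, e2, ← mul_sub, abs_of_nonneg (mul_nonneg (by positivity) (by linarith))]
  calc 1 / (2 * (q:ℝ)) * (1 / Real.sin x - 1 / x) ≤ 1 / (2 * (q:ℝ)) * x := by
        gcongr; linarith
    _ ≤ π / (4 * q) := by
        rw [hxdef, show 1 / (2 * (q:ℝ)) * ((m:ℝ) * π / q) = (m:ℝ) * π / (2 * q ^ 2) by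
          field_simp, div_le_div_iff₀ (by positivity) (by positivity)]
        nlinarith [mul_le_mul_of_nonneg_left hm2' (show (0:ℝ) ≤ π * q by positivity)]


lemma min_est {q n : ℕ} (hq : 2 ≤ q) (hn1 : 1 ≤ n) (hnq : n < q) :
    |1 / ((min n (q - n) : ℕ) : ℝ) - (1 / (n:ℝ) + 1 / ((q - n : ℕ) : ℝ))| ≤ 2 / q := by
  have hq0 : (0:ℝ) < q := by positivity
  have hn0 : (0:ℝ) < n := by exact_mod_cast hn1
  have hqn1 : 1 ≤ q - n := by omega
  have hqn0 : (0:ℝ) < ((q - n : ℕ) : ℝ) := by exact_mod_cast hqn1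
  rcases le_or_gt n (q - n) with h | h
  · rw [min_eq_left h]
    have h2 : (q:ℝ) ≤ 2 * ((q - n : ℕ) : ℝ) := by exact_mod_cast (by omega : q ≤ 2 * (q - n))
    rw [show 1 / ((n:ℕ):ℝ) - (1 / (n:ℝ) + 1 / ((q - n : ℕ) : ℝ)) = -(1 / ((q - n : ℕ) : ℝ)) by ring,
      abs_neg, abs_of_nonneg (by positivity), div_le_div_iff₀ hqn0 hq0]
    linarith
  · rw [min_eq_right h.le]
    have h2 : (q:ℝ) ≤ 2 * (n:ℝ) := by exact_mod_cast (by omega : q ≤ 2 * n)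
    rw [show 1 / ((q - n : ℕ):ℝ) - (1 / (n:ℝ) + 1 / ((q - n : ℕ) : ℝ)) = -(1 / (n:ℝ)) by ring,
      abs_neg, abs_of_nonneg (by positivity), div_le_div_iff₀ hn0 hq0]
    linarith

lemma reflect_sum (q : ℕ) :
    ∑ n ∈ Finset.Ico 1 q, 1 / (((q - n : ℕ)) : ℝ) = ∑ n ∈ Finset.Ico 1 q, 1 / (n : ℝ) := by
  refine Finset.sum_nbij' (fun n => q - n) (fun n => q - n) ?_ ?_ ?_ ?_ ?_ <;>
    intro a ha <;> simp only [Finset.mem_Ico] at * <;> first | omega | rfl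

lemma harmonic_eq (q : ℕ) (hq : 2 ≤ q) :
    ∑ n ∈ Finset.Ico 1 q, 1 / (n : ℝ) = ((harmonic (q - 1) : ℚ) : ℝ) := by
  rw [Finset.sum_Ico_eq_sum_range, harmonic]
  push_cast
  refine Finset.sum_congr rfl fun i _ => ?_
  ring

/-- The elliptic sum `S(q) = Σ_{n=1}^{q−1} 1/(2q sin(nπ/q))`. -/
noncomputable def Sq (q : ℕ) : ℝ :=
  ∑ n ∈ Finset.Ico 1 q, 1 / (2 * (q:ℝ) * Real.sin (n*π/q))

theorem elliptic_sum_asymptotic :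
    ∃ C : ℝ, ∀ q : ℕ, 2 ≤ q → |Sq q - (1/π) * Real.log q| ≤ C := by
  use π
  intro q hq
  have hπ := Real.pi_pos
  have hπ3 : (3:ℝ) < π := Real.pi_gt_three
  have hq0 : (0:ℝ) < q := by positivity
  have hcard : ((Finset.Ico 1 q).card : ℝ) ≤ q := by
    rw [Nat.card_Ico]; exact_mod_cast Nat.sub_le q 1
  set T : ℝ := ∑ n ∈ Finset.Ico 1 q, 1 / (2 * π * ((min n (q - n) : ℕ) : ℝ)) with hT
  set U : ℝ := ∑ n ∈ Finset.Ico 1 q, 1 / ((min n (q - n) : ℕ) : ℝ) with hU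
  set H : ℝ := ∑ n ∈ Finset.Ico 1 q, 1 / (n : ℝ) with hH
  -- Step 1 : |Sq q - T| ≤ π/4
  have h1 : |Sq q - T| ≤ π / 4 := by
    rw [Sq, hT, ← Finset.sum_sub_distrib]
    calc |∑ n ∈ Finset.Ico 1 q, (1 / (2 * (q:ℝ) * Real.sin (n*π/q))
            - 1 / (2 * π * ((min n (q - n) : ℕ) : ℝ)))|
        ≤ ∑ n ∈ Finset.Ico 1 q, |1 / (2 * (q:ℝ) * Real.sin (n*π/q))
            - 1 / (2 * π * ((min n (q - n) : ℕ) : ℝ))| := Finset.abs_sum_le_sum_abs _ _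
      _ ≤ ∑ n ∈ Finset.Ico 1 q, π / (4 * q) := by
          refine Finset.sum_le_sum fun n hn => ?_
          rw [Finset.mem_Ico] at hn
          exact term_est hq hn.1 hn.2
      _ = ((Finset.Ico 1 q).card : ℝ) * (π / (4 * q)) := by
          rw [Finset.sum_const, nsmul_eq_mul]
      _ ≤ (q : ℝ) * (π / (4 * q)) := by gcongr
      _ = π / 4 := by field_simp
  -- Step 2 : T = (1/(2π)) U
  have h2 : T = 1 / (2 * π) * U := by
    rw [hT, hU, Finset.mul_sum]
    refine Finset.sum_congr rfl fun n _ => ?_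
    ring
  -- Step 3 : |U - 2H| ≤ 2
  have h3 : |U - 2 * H| ≤ 2 := by
    have h2H : (2:ℝ) * H = ∑ n ∈ Finset.Ico 1 q, (1 / (n:ℝ) + 1 / ((q - n : ℕ) : ℝ)) := by
      rw [Finset.sum_add_distrib, reflect_sum q, hH]; ring
    rw [h2H, hU, ← Finset.sum_sub_distrib]
    calc |∑ n ∈ Finset.Ico 1 q, (1 / ((min n (q - n) : ℕ) : ℝ)
            - (1 / (n:ℝ) + 1 / ((q - n : ℕ) : ℝ)))|
        ≤ ∑ n ∈ Finset.Ico 1 q, |1 / ((min n (q - n) : ℕ) : ℝ)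
            - (1 / (n:ℝ) + 1 / ((q - n : ℕ) : ℝ))| := Finset.abs_sum_le_sum_abs _ _
      _ ≤ ∑ n ∈ Finset.Ico 1 q, 2 / (q:ℝ) := by
          refine Finset.sum_le_sum fun n hn => ?_
          rw [Finset.mem_Ico] at hn
          exact min_est hq hn.1 hn.2
      _ = ((Finset.Ico 1 q).card : ℝ) * (2 / q) := by
          rw [Finset.sum_const, nsmul_eq_mul]
      _ ≤ (q : ℝ) * (2 / q) := by gcongr
      _ = 2 := by field_simp
  -- Step 4 : |H - log q| ≤ 1
  have h4 : |H - Real.log q| ≤ 1 := by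
    have e := harmonic_eq q hq
    have hlow : Real.log q ≤ H := by
      have := log_add_one_le_harmonic (q - 1)
      have hc : (((q - 1 : ℕ) : ℝ) + 1) = (q : ℝ) := by
        have : ((q - 1 : ℕ) : ℝ) = (q:ℝ) - 1 := by
          rw [Nat.cast_sub (by omega)]; norm_num
        rw [this]; ring
      rw [← e] at this
      push_cast at this
      rw [hc] at this
      exact this
    have hup : H ≤ 1 + Real.log q := by
      have := harmonic_le_one_add_log (q - 1)
      rw [← e] at this
      refine this.trans ?_
      have h1q : (0:ℝ) < ((q - 1 : ℕ) : ℝ) := by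
        have : 1 ≤ q - 1 := by omega
        exact_mod_cast this
      have : Real.log ((q - 1 : ℕ) : ℝ) ≤ Real.log q :=
        Real.log_le_log h1q (by exact_mod_cast Nat.sub_le q 1)
      linarith
    rw [abs_le]; constructor <;> linarith
  -- combine
  have hT2 : |T - 1/π * H| ≤ 1 / π := by
    have : T - 1/π * H = 1 / (2*π) * (U - 2 * H) := by rw [h2]; ring
    rw [this, abs_mul, abs_of_nonneg (by positivity)]
    calc 1 / (2*π) * |U - 2*H| ≤ 1 / (2*π) * 2 := by gcongr
      _ = 1 / π := by field_simp
  have htri : |Sq q - 1/π * Real.log q| ≤ |Sq q - T| + |T - 1/π * H| + |1/π * H - 1/π * Real.log q| := by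
    have := abs_sub_le (Sq q) T (1/π * Real.log q)
    have := abs_sub_le T (1/π * H) (1/π * Real.log q)
    linarith [abs_sub_le (Sq q) T (1/π * Real.log q), abs_sub_le T (1/π * H) (1/π * Real.log q)]
  have hlast : |1/π * H - 1/π * Real.log q| ≤ 1 / π := by
    rw [← mul_sub, abs_mul, abs_of_nonneg (by positivity)]
    calc 1/π * |H - Real.log q| ≤ 1/π * 1 := by gcongr
      _ = 1/π := by ring
  have hfin : π / 4 + 1/π + 1/π ≤ π := by
    have hinv : 1/π ≤ 1/3 := by
      rw [div_le_div_iff₀ hπ (by norm_num)]; linarith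
    linarith
  linarith
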